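/- The Lie algebra aff(n, K) is a Frobenius Lie algebra: there exists a linear functional ξ ∈ aff(n,K)* such that the skew bilinear form B_ξ(a, b) = ξ([a, b]) on aff(n, K) is nondegenerate. -/

import Mathlib

/-- The bracket of `aff(n, K) = gl(n,K) ⋉ K^n`: `[(A,v),(B,w)] = ([A,B], Aw - Bv)`. -/
def affBracket {K : Type*} [Field K] {n : ℕ}
    (x y : Matrix (Fin n) (Fin n) K × (Fin n → K)) :
    Matrix (Fin n) (Fin n) K × (Fin n → K) :=
  (x.1 * y.1 - y.1 * x.1, x.1.mulVec y.2 - y.1.mulVec x.2)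

section Aux

variable {K : Type*} [Field K] {n : ℕ}

/-- The Frobenius functional: superdiagonal sum plus last coordinate. -/
noncomputable def affXi (K : Type*) [Field K] (n : ℕ) :
    (Matrix (Fin n) (Fin n) K × (Fin n → K)) →ₗ[K] K where
  toFun x := (∑ i : Fin n, ∑ j : Fin n, (if (j : ℕ) = (i : ℕ) + 1 then (1:K) else 0) * x.1 i j)
      + ∑ i : Fin n, (if (i : ℕ) + 1 = n then (1:K) else 0) * x.2 i
  map_add' x y := by
    simp only [Prod.fst_add, Prod.snd_add, Matrix.add_apply, Pi.add_apply, mul_add,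
      Finset.sum_add_distrib]
    ring
  map_smul' c x := by
    simp only [Prod.smul_fst, Prod.smul_snd, Matrix.smul_apply, Pi.smul_apply, smul_eq_mul,
      RingHom.id_apply, Finset.mul_sum, mul_add]
    congr 1 <;> refine Finset.sum_congr rfl fun i _ => ?_
    · refine Finset.sum_congr rfl fun j _ => by ring
    · ring

lemma affSumCollapse (g : Fin n → K) (P : ℕ → Prop) [DecidablePred P] (i0 : Fin n)
    (h : P i0.val) (huniq : ∀ i : Fin n, P i.val → i = i0) :
    (∑ i : Fin n, (if P i.val then (1:K) else 0) * g i) = g i0 := by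
  rw [Finset.sum_eq_single i0]
  · simp [h]
  · intro b _ hb
    rw [if_neg fun hP => hb (huniq b hP), zero_mul]
  · simp

lemma affSumVanish (g : Fin n → K) (P : ℕ → Prop) [DecidablePred P]
    (h : ∀ i : Fin n, ¬ P i.val) :
    (∑ i : Fin n, (if P i.val then (1:K) else 0) * g i) = 0 := by
  refine Finset.sum_eq_zero fun i _ => ?_
  rw [if_neg (h i), zero_mul]

end Aux

/-- `aff(n, K)` is a Frobenius Lie algebra: there is a linear functional `ξ` on
`aff(n,K)` for which the skew bilinear form `B_ξ(a,b) = ξ([a,b])` is nondegenerate. -/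
theorem affn_is_frobenius (K : Type*) [Field K] [CharZero K] (n : ℕ) :
    ∃ ξ : (Matrix (Fin n) (Fin n) K × (Fin n → K)) →ₗ[K] K,
      ∀ a : Matrix (Fin n) (Fin n) K × (Fin n → K),
        (∀ b : Matrix (Fin n) (Fin n) K × (Fin n → K), ξ (affBracket a b) = 0) → a = 0 := by
  refine ⟨affXi K n, ?_⟩
  rintro ⟨A, v⟩ h
  -- Step 1: last row of A is zero.
  have hrow : ∀ i k : Fin n, (i : ℕ) + 1 = n → A i k = 0 := by
    intro i k hi
    have h1 := h (0, Pi.single k 1)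
    simp only [affBracket, affXi, LinearMap.coe_mk, AddHom.coe_mk, mul_zero, zero_mul,
      sub_zero, zero_sub, Matrix.zero_apply, Matrix.mulVec_single, Matrix.zero_mulVec,
      Pi.sub_apply, Pi.zero_apply, mul_one, MulOpposite.op_one, one_smul, Matrix.col_apply] at h1
    rw [affSumCollapse (fun x => A x k) (fun m => m + 1 = n) i hi
      (fun b hb => Fin.ext (by omega))] at h1
    simpa using h1
  -- Step 2: the commutator relation from brackets with (E_{pq}, 0).
  have hrel : ∀ p q : Fin n,
      (∑ i : Fin n, (if (q : ℕ) = (i : ℕ) + 1 then (1:K) else 0) * A i p)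
        - (∑ j : Fin n, (if (j : ℕ) = (p : ℕ) + 1 then (1:K) else 0) * A q j)
        - (if (p : ℕ) + 1 = n then (1:K) else 0) * v q = 0 := by
    intro p q
    set E : Matrix (Fin n) (Fin n) K := Matrix.single p q 1 with hE
    have e1 : ∀ i j, (A * E) i j = if q = j then A i p else 0 := fun i j => by
      simp [hE, Matrix.mul_apply, Matrix.single, Matrix.of_apply, ite_and,
        Finset.sum_ite_eq, Finset.sum_ite_eq']
    have e2 : ∀ i j, (E * A) i j = if p = i then A q j else 0 := fun i j => by
      simp [hE, Matrix.mul_apply, Matrix.single, Matrix.of_apply, ite_and,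
        Finset.sum_ite_eq, Finset.sum_ite_eq']
    have e3 : ∀ i, E.mulVec v i = if p = i then v q else 0 := fun i => by
      simp [hE, Matrix.mulVec, dotProduct, Matrix.single, ite_and,
        Finset.sum_ite_eq, Finset.sum_ite_eq']
    have S1 : (∑ i : Fin n, ∑ j : Fin n,
        (if (j : ℕ) = (i : ℕ) + 1 then (1:K) else 0) * (A * E) i j)
        = ∑ i : Fin n, (if (q : ℕ) = (i : ℕ) + 1 then (1:K) else 0) * A i p := by
      refine Finset.sum_congr rfl fun i _ => ?_
      rw [Finset.sum_eq_single q]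
      · rw [e1]; simp
      · intro b _ hb; simp [e1, Ne.symm hb]
      · simp
    have S2 : (∑ i : Fin n, ∑ j : Fin n,
        (if (j : ℕ) = (i : ℕ) + 1 then (1:K) else 0) * (E * A) i j)
        = ∑ j : Fin n, (if (j : ℕ) = (p : ℕ) + 1 then (1:K) else 0) * A q j := by
      rw [Finset.sum_eq_single p]
      · refine Finset.sum_congr rfl fun j _ => ?_
        rw [e2, if_pos rfl]
      · intro b _ hb
        refine Finset.sum_eq_zero fun j _ => ?_
        simp [e2, Ne.symm hb]
      · simp
    have S3 : (∑ i : Fin n, (if (i : ℕ) + 1 = n then (1:K) else 0) * E.mulVec v i)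
        = (if (p : ℕ) + 1 = n then (1:K) else 0) * v q := by
      rw [Finset.sum_eq_single p]
      · rw [e3, if_pos rfl]
      · intro b _ hb; simp [e3, Ne.symm hb]
      · simp
    have h1 := h (E, 0)
    simp only [affBracket, affXi, LinearMap.coe_mk, AddHom.coe_mk, Matrix.mulVec_zero,
      Matrix.sub_apply, Pi.sub_apply, Pi.zero_apply, Pi.neg_apply, zero_sub, mul_sub,
      mul_neg, Finset.sum_sub_distrib, Finset.sum_neg_distrib] at h1
    rw [S1, S2, S3] at h1
    linear_combination h1
  -- Step 3: pass to ℕ-indexed entries.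
  set A' : ℕ → ℕ → K := fun i j => if hij : i < n ∧ j < n then A ⟨i, hij.1⟩ ⟨j, hij.2⟩ else 0
    with hA'
  have hA'range : ∀ (i j : ℕ) (hi : i < n) (hj : j < n), A' i j = A ⟨i, hi⟩ ⟨j, hj⟩ := by
    intro i j hi hj; simp [hA', hi, hj]
  have hA'out : ∀ i j : ℕ, (n ≤ i ∨ n ≤ j) → A' i j = 0 := by
    intro i j hij
    have hn : ¬ (i < n ∧ j < n) := by omega
    simp [hA', hn]
  -- Step 4: collapsed form of the relation.
  have hrelN : ∀ p q : Fin n,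
      (if 1 ≤ (q : ℕ) then A' ((q : ℕ) - 1) (p : ℕ) else 0)
        - (if (p : ℕ) + 1 < n then A' (q : ℕ) ((p : ℕ) + 1) else 0)
        - (if (p : ℕ) + 1 = n then v q else 0) = 0 := by
    intro p q
    have hr := hrel p q
    rcases Nat.lt_or_ge (q : ℕ) 1 with hq | hq
    · rw [affSumVanish (fun x => A x p) (fun m => (q : ℕ) = m + 1) (fun i => by omega)] at hr
      rw [if_neg (by omega)]
      rcases Nat.lt_or_ge ((p : ℕ) + 1) n with hp | hp
      · rw [affSumCollapse (fun x => A q x) (fun m => m = (p : ℕ) + 1) ⟨(p : ℕ) + 1, hp⟩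
          (by simp) (fun b hb => Fin.ext (by simpa using hb))] at hr
        rw [if_pos hp, if_neg (by omega), hA'range _ _ q.isLt hp]
        rw [if_neg (show ¬ ((p : ℕ) + 1 = n) by omega), zero_mul, sub_zero] at hr
        simp only [Fin.eta] at hr ⊢
        linear_combination hr
      · rw [affSumVanish (fun x => A q x) (fun m => m = (p : ℕ) + 1)
          (fun j => by have := j.isLt; omega)] at hr
        rw [if_neg (by omega), if_pos (by have := p.isLt; omega)]
        rw [if_pos (by have := p.isLt; omega)] at hr
        simp only [one_mul] at hr
        linear_combination hr
    · rw [affSumCollapse (fun x => A x p) (fun m => (q : ℕ) = m + 1) ⟨(q : ℕ) - 1, by omega⟩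
        (by simp only [Fin.val_mk]; omega)
        (fun b hb => Fin.ext (by simp only [Fin.val_mk]; omega))] at hr
      rw [if_pos hq, hA'range _ _ (by omega) p.isLt]
      rcases Nat.lt_or_ge ((p : ℕ) + 1) n with hp | hp
      · rw [affSumCollapse (fun x => A q x) (fun m => m = (p : ℕ) + 1) ⟨(p : ℕ) + 1, hp⟩
          (by simp) (fun b hb => Fin.ext (by simpa using hb))] at hr
        rw [if_pos hp, if_neg (by omega), hA'range _ _ q.isLt hp]
        rw [if_neg (show ¬ ((p : ℕ) + 1 = n) by omega), zero_mul, sub_zero] at hr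
        simp only [Fin.eta] at hr ⊢
        linear_combination hr
      · rw [affSumVanish (fun x => A q x) (fun m => m = (p : ℕ) + 1)
          (fun j => by have := j.isLt; omega)] at hr
        rw [if_neg (by omega), if_pos (by have := p.isLt; omega)]
        rw [if_pos (by have := p.isLt; omega)] at hr
        simp only [one_mul, Fin.eta] at hr
        linear_combination hr
  -- Step 5: the shift relation.
  have hshift : ∀ i j : ℕ, j + 1 < n → A' (i + 1) (j + 1) = A' i j := by
    intro i j hj
    by_cases hi : i + 1 < n
    · have hr := hrelN ⟨j, by omega⟩ ⟨i + 1, hi⟩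
      simp only [Fin.val_mk] at hr
      rw [if_pos (by omega), if_pos hj, if_neg (by omega), sub_zero,
        Nat.add_sub_cancel, sub_eq_zero] at hr
      rw [hr]
    · by_cases hi2 : i + 1 = n
      · rw [hA'out _ _ (Or.inl (by omega)), hA'range _ _ (by omega) (by omega),
          hrow _ _ (by simp only [Fin.val_mk]; omega)]
      · rw [hA'out _ _ (Or.inl (by omega)), hA'out _ _ (Or.inl (by omega))]
  -- Step 6: top row vanishes off the corner.
  have htop : ∀ j : ℕ, 1 ≤ j → j < n → A' 0 j = 0 := by
    intro j h1j hjn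
    have hr := hrelN ⟨j - 1, by omega⟩ ⟨0, by omega⟩
    simp only [Fin.val_mk] at hr
    rw [if_neg (by omega), if_pos (by omega), if_neg (by omega), sub_zero,
      show j - 1 + 1 = j from by omega] at hr
    linear_combination -hr
  -- Step 7: iterated shift.
  have hshiftt : ∀ t i j : ℕ, j + t < n → A' (i + t) (j + t) = A' i j := by
    intro t
    induction t with
    | zero => intro i j _; rfl
    | succ t ih =>
      intro i j hjt
      rw [show i + (t + 1) = (i + t) + 1 from by ring,
        show j + (t + 1) = (j + t) + 1 from by ring, hshift _ _ (by omega),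
        ih i j (by omega)]
  -- Step 8: A vanishes.
  have hAzero : ∀ i j : Fin n, A i j = 0 := by
    intro i j
    rw [← hA'range i j i.isLt j.isLt]
    rcases le_or_gt (j : ℕ) (i : ℕ) with hle | hlt
    · have e1 : A' (i : ℕ) (j : ℕ) = A' ((i : ℕ) - (j : ℕ)) 0 := by
        have := hshiftt (j : ℕ) ((i : ℕ) - (j : ℕ)) 0 (by have := j.isLt; omega)
        rw [show (i:ℕ) - (j:ℕ) + (j:ℕ) = (i:ℕ) from by omega, zero_add] at this
        exact this
      have e2 : A' ((i : ℕ) - (j : ℕ)) 0 = A' (n - 1) (n - 1 - ((i:ℕ) - (j:ℕ))) := by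
        have := hshiftt (n - 1 - ((i:ℕ) - (j:ℕ))) ((i : ℕ) - (j : ℕ)) 0
          (by have := i.isLt; omega)
        rw [show (i:ℕ) - (j:ℕ) + (n - 1 - ((i:ℕ) - (j:ℕ))) = n - 1 from
          by have := i.isLt; omega, zero_add] at this
        exact this.symm
      rw [e1, e2, hA'range _ _ (by have := i.isLt; omega) (by have := i.isLt; omega),
        hrow _ _ (by simp only [Fin.val_mk]; have := i.isLt; omega)]
    · have := hshiftt (i : ℕ) 0 ((j : ℕ) - (i : ℕ)) (by have := j.isLt; omega)
      rw [zero_add, show (j:ℕ) - (i:ℕ) + (i:ℕ) = (j:ℕ) from by omega] at this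
      rw [this, htop _ (by omega) (by have := j.isLt; omega)]
  -- Step 9: A' vanishes everywhere.
  have hA'zero : ∀ i j : ℕ, A' i j = 0 := by
    intro i j
    by_cases hij : i < n ∧ j < n
    · rw [hA'range _ _ hij.1 hij.2, hAzero]
    · exact hA'out _ _ (by omega)
  -- Step 10: v vanishes.
  have hvzero : ∀ q : Fin n, v q = 0 := by
    intro q
    have hn : 0 < n := q.pos
    have hr := hrelN ⟨n - 1, by omega⟩ q
    simp only [Fin.val_mk, hA'zero, ite_self] at hr
    rw [if_pos (show n - 1 + 1 = n by omega)] at hr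
    linear_combination -hr
  -- Conclude.
  have hA : A = 0 := by ext i j; exact hAzero i j
  have hv : v = 0 := funext hvzero
  rw [Prod.mk.injEq]
  exact ⟨hA, hv⟩
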